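/- Define k₁ : ℝ₊ → ℝ by k₁(w) = 5 + 1/(1+w²), and let k₂ : (5,∞) → (5/2,∞) be the inverse of P(z) = 2z³ − 9z² + 12z restricted to (5/2,∞) (so P(k₂(y)) = y). Then the composition T = k₂ ∘ k₁ maps [5/2, ∞) into itself and is a contraction: for all w ≥ 5/2, |T'(w)| ≤ (|k₁'(5/2)| / P'(5/2)) = (5/(1+25/4)²)·(2/9) < 1. Consequently T has a unique fixed point in [5/2,∞), and every iterate sequence w_{k+1} = T(w_k) with w₀ ≥ 5/2 converges to it. -/

import Mathlib

open Filter Topology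

theorem stmt_13 (P : ℝ → ℝ) (hP : ∀ z, P z = 2*z^3 - 9*z^2 + 12*z)
    (k₁ : ℝ → ℝ) (hk₁ : ∀ w, k₁ w = 5 + 1/(1 + w^2))
    (k₂ : ℝ → ℝ) (hk₂ : ∀ y, 5 < y → 5/2 < k₂ y ∧ P (k₂ y) = y)
    (T : ℝ → ℝ) (hT : ∀ w, T w = k₂ (k₁ w)) :
    (∀ w : ℝ, 5/2 ≤ w → 5/2 ≤ T w) ∧
    (∀ w : ℝ, 5/2 ≤ w →
      |deriv T w| ≤ (5 / (1 + 25/4)^2) * (2/9) ∧ (5 / (1 + 25/4)^2) * (2/9) < 1) ∧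
    (∃! wbar : ℝ, wbar ∈ Set.Ici (5/2 : ℝ) ∧ T wbar = wbar) ∧
    (∀ wbar : ℝ, wbar ∈ Set.Ici (5/2 : ℝ) → T wbar = wbar →
      ∀ w : ℕ → ℝ, 5/2 ≤ w 0 → (∀ k, w (k+1) = T (w k)) →
        Tendsto w atTop (𝓝 wbar)) := by
  have hPe : P = fun z => 2*z^3 - 9*z^2 + 12*z := funext hP
  have hk₁e : k₁ = fun w => 5 + 1/(1 + w^2) := funext hk₁
  have hTe : T = fun w => k₂ (k₁ w) := funext hT
  obtain ⟨c, hc⟩ : ∃ c : ℝ, c = (5 / (1 + 25/4)^2) * (2/9) := ⟨_, rfl⟩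
  -- derivative of P
  have hP' : ∀ z : ℝ, HasDerivAt P (6*z^2 - 18*z + 12) z := by
    intro z
    rw [hPe]
    have h := (((hasDerivAt_pow 3 z).const_mul 2).sub ((hasDerivAt_pow 2 z).const_mul 9)).add
      ((hasDerivAt_id z).const_mul 12)
    exact h.congr_deriv (by push_cast; ring)
  -- P strictly mono on Ici (5/2)
  have hPc : Continuous P := by rw [hPe]; fun_prop
  have hPmono : StrictMonoOn P (Set.Ici (5/2 : ℝ)) := by
    apply strictMonoOn_of_deriv_pos (convex_Ici _) hPc.continuousOn
    intro z hz
    rw [interior_Ici] at hz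
    rw [(hP' z).deriv]
    nlinarith [(Set.mem_Ioi.mp hz).le]
  -- k₁ values
  have hk₁gt : ∀ w : ℝ, 5 < k₁ w := by
    intro w
    have h : 0 < 1/(1 + w^2) := by positivity
    rw [hk₁]; linarith
  have hz' : ∀ w : ℝ, 5/2 < k₂ (k₁ w) ∧ P (k₂ (k₁ w)) = k₁ w := fun w => hk₂ _ (hk₁gt w)
  -- continuity of k₂ at points > 5
  have hk₂cont : ∀ y₀ : ℝ, 5 < y₀ → ContinuousAt k₂ y₀ := by
    intro y₀ hy₀
    obtain ⟨hz₀, hPz₀⟩ := hk₂ y₀ hy₀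
    rw [Metric.continuousAt_iff]
    intro ε hε
    set z₀ := k₂ y₀ with hz₀def
    set ε' : ℝ := min ε ((z₀ - 5/2)/2) with hε'
    have hε'pos : 0 < ε' := lt_min hε (by linarith)
    have hε'le : ε' ≤ (z₀ - 5/2)/2 := min_le_right _ _
    have h1 : (5/2 : ℝ) < z₀ - ε' := by linarith
    have h2 : P (z₀ - ε') < y₀ := by
      rw [← hPz₀]
      exact hPmono (Set.mem_Ici.mpr h1.le) (Set.mem_Ici.mpr hz₀.le) (by linarith)
    have h3 : y₀ < P (z₀ + ε') := by
      rw [← hPz₀]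
      exact hPmono (Set.mem_Ici.mpr hz₀.le) (Set.mem_Ici.mpr (by linarith)) (by linarith)
    have h4 : (5 : ℝ) < P (z₀ - ε') := by
      have h5 : P (5/2 : ℝ) = 5 := by rw [hP]; norm_num
      rw [← h5]
      exact hPmono Set.self_mem_Ici (Set.mem_Ici.mpr h1.le) h1
    refine ⟨min (y₀ - P (z₀ - ε')) (P (z₀ + ε') - y₀), lt_min (by linarith) (by linarith), ?_⟩
    intro y hy
    rw [Real.dist_eq] at hy ⊢
    have hy1 : P (z₀ - ε') < y := by
      have := abs_lt.mp (lt_of_lt_of_le hy (min_le_left _ _))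
      linarith [this.1]
    have hy2 : y < P (z₀ + ε') := by
      have := abs_lt.mp (lt_of_lt_of_le hy (min_le_right _ _))
      linarith [this.2]
    have hy5 : 5 < y := lt_trans h4 hy1
    obtain ⟨hzy, hPzy⟩ := hk₂ y hy5
    have hlt1 : z₀ - ε' < k₂ y := by
      by_contra h
      push_neg at h
      have := hPmono.monotoneOn (Set.mem_Ici.mpr hzy.le) (Set.mem_Ici.mpr h1.le) h
      rw [hPzy] at this; linarith
    have hlt2 : k₂ y < z₀ + ε' := by
      by_contra h
      push_neg at h
      have := hPmono.monotoneOn (Set.mem_Ici.mpr (by linarith : (5/2:ℝ) ≤ z₀ + ε'))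
        (Set.mem_Ici.mpr hzy.le) h
      rw [hPzy] at this; linarith
    have : |k₂ y - z₀| < ε' := abs_lt.mpr ⟨by linarith, by linarith⟩
    exact lt_of_lt_of_le this (min_le_left _ _)
  -- derivative of T
  have hT' : ∀ w : ℝ, HasDerivAt T
      ((6*(k₂ (k₁ w))^2 - 18*(k₂ (k₁ w)) + 12)⁻¹ * (-(2*w)/(1+w^2)^2)) w := by
    intro w
    obtain ⟨hzgt, hPz⟩ := hz' w
    have hd : (0:ℝ) < 6*(k₂ (k₁ w))^2 - 18*(k₂ (k₁ w)) + 12 := by nlinarith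
    have hk₂d : HasDerivAt k₂ (6*(k₂ (k₁ w))^2 - 18*(k₂ (k₁ w)) + 12)⁻¹ (k₁ w) := by
      apply HasDerivAt.of_local_left_inverse (hk₂cont _ (hk₁gt w)) (hP' _) (ne_of_gt hd)
      filter_upwards [Ioi_mem_nhds (hk₁gt w)] with y hy
      exact (hk₂ y hy).2
    have hk₁d : HasDerivAt k₁ (-(2*w)/(1+w^2)^2) w := by
      rw [hk₁e]
      have hne : (1 + w^2) ≠ 0 := by positivity
      have h := (((hasDerivAt_pow 2 w).const_add 1).inv hne).const_add 5
      simp only [one_div]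
      exact h.congr_deriv (by push_cast; ring)
    have := hk₂d.comp w hk₁d
    rw [hTe]
    exact this
  -- the deriv bound
  have hcval : c = 160/7569 := by rw [hc]; norm_num
  have hbound : ∀ w : ℝ, 5/2 ≤ w → |deriv T w| ≤ c := by
    intro w hw
    rw [(hT' w).deriv]
    obtain ⟨hzgt, _⟩ := hz' w
    have hd : (9/2 : ℝ) ≤ 6*(k₂ (k₁ w))^2 - 18*(k₂ (k₁ w)) + 12 := by nlinarith
    have hw2 : (0:ℝ) < (1+w^2)^2 := by positivity
    rw [abs_mul, abs_div, abs_neg, abs_inv]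
    have h1 : |6*(k₂ (k₁ w))^2 - 18*(k₂ (k₁ w)) + 12| = 6*(k₂ (k₁ w))^2 - 18*(k₂ (k₁ w)) + 12 :=
      abs_of_pos (by linarith)
    have h2 : |2*w| = 2*w := abs_of_pos (by linarith)
    have h3 : |(1+w^2)^2| = (1+w^2)^2 := abs_of_pos hw2
    rw [h1, h2, h3]
    have hA : 2*w/(1+w^2)^2 ≤ 5/(1+25/4)^2 := by
      rw [div_le_div_iff₀ hw2 (by norm_num)]
      nlinarith [sq_nonneg (w - 5/2), sq_nonneg w, sq_nonneg (w^2 - 25/4)]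
    have hB : (6*(k₂ (k₁ w))^2 - 18*(k₂ (k₁ w)) + 12)⁻¹ ≤ 2/9 := by
      rw [inv_le_comm₀ (by linarith) (by norm_num)]
      linarith
    calc (6*(k₂ (k₁ w))^2 - 18*(k₂ (k₁ w)) + 12)⁻¹ * (2*w/(1+w^2)^2)
        ≤ (2/9) * (5/(1+25/4)^2) := by
          apply mul_le_mul hB hA (by positivity) (by norm_num)
      _ = c := by rw [hc]; ring
  have hc1 : c < 1 := by rw [hcval]; norm_num
  have hc0 : 0 ≤ c := by rw [hcval]; norm_num
  -- part 1
  have part1 : ∀ w : ℝ, 5/2 ≤ w → 5/2 ≤ T w := by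
    intro w _
    rw [hT]
    exact (hz' w).1.le
  -- Lipschitz estimate
  have hTdiff : ∀ x : ℝ, DifferentiableAt ℝ T x := fun x => (hT' x).differentiableAt
  have hLip : ∀ x y : ℝ, 5/2 ≤ x → 5/2 ≤ y → |T y - T x| ≤ c * |y - x| := by
    intro x y hx hy
    have := Convex.norm_image_sub_le_of_norm_deriv_le (f := T) (s := Set.Ici (5/2 : ℝ))
      (fun z _ => hTdiff z) (fun z hz => by rw [Real.norm_eq_abs]; exact hbound z hz)
      (convex_Ici _) (Set.mem_Ici.mpr hx) (Set.mem_Ici.mpr hy)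
    simpa [Real.norm_eq_abs] using this
  -- existence of a fixed point via IVT
  have hTcont : Continuous T := by
    exact continuous_iff_continuousAt.mpr fun x => (hTdiff x).continuousAt
  have hexists : ∃ w₀ : ℝ, 5/2 ≤ w₀ ∧ T w₀ = w₀ := by
    have h1c : (0:ℝ) < 1 - c := by linarith
    obtain ⟨a, ha⟩ : ∃ a : ℝ, a = T (5/2 : ℝ) := ⟨_, rfl⟩
    have ha0 : 5/2 ≤ a := by rw [ha]; exact part1 _ (le_refl _)
    obtain ⟨M, hM⟩ : ∃ M : ℝ, M = 5/2 + (a - 5/2)/(1-c) + 1 := ⟨_, rfl⟩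
    have hM0 : 5/2 ≤ M := by
      have : 0 ≤ (a - 5/2)/(1-c) := div_nonneg (by linarith) (by linarith)
      linarith
    have hTM : T M < M := by
      have h1 : |T M - a| ≤ c * |M - 5/2| := by
        rw [ha]; exact hLip (5/2) M (le_refl _) hM0
      have h2 : |M - 5/2| = M - 5/2 := abs_of_nonneg (by linarith)
      rw [h2] at h1
      have h3 : T M - a ≤ c * (M - 5/2) := le_trans (le_abs_self _) h1
      have h1c' : (1:ℝ) - c ≠ 0 := ne_of_gt h1c
      have h5 : c * (M - 5/2) = M - a - (1-c) := by
        rw [hM]; field_simp; ring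
      linarith
    have hg : ContinuousOn (fun w => T w - w) (Set.Icc (5/2 : ℝ) M) :=
      (hTcont.sub continuous_id).continuousOn
    have h0mem : (0:ℝ) ∈ Set.Icc (T M - M) (T (5/2) - 5/2) :=
      ⟨by linarith, by rw [← ha]; linarith⟩
    obtain ⟨w₀, hw₀mem, hw₀⟩ := intermediate_value_Icc' hM0 hg h0mem
    exact ⟨w₀, hw₀mem.1, by dsimp at hw₀; exact sub_eq_zero.mp hw₀⟩
  obtain ⟨w₀, hw₀1, hw₀2⟩ := hexists
  -- uniqueness
  have huniq : ∀ u v : ℝ, 5/2 ≤ u → 5/2 ≤ v → T u = u → T v = v → u = v := by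
    intro u v hu hv hfu hfv
    have h := hLip u v hu hv
    rw [hfu, hfv] at h
    have habs : |v - u| ≤ 0 := by nlinarith [abs_nonneg (v - u)]
    have h0 : |v - u| = 0 := le_antisymm habs (abs_nonneg _)
    have := abs_eq_zero.mp h0
    linarith [sub_eq_zero.mp this]
  have hb2 : ∀ w : ℝ, 5/2 ≤ w →
      |deriv T w| ≤ (5 / (1 + 25/4)^2) * (2/9) ∧ (5 / (1 + 25/4)^2) * (2/9) < 1 := by
    intro w hw
    constructor
    · rw [← hc]; exact hbound w hw
    · norm_num
  refine ⟨part1, hb2, ⟨w₀, ⟨hw₀1, hw₀2⟩, ?_⟩, ?_⟩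
  · rintro v ⟨hv1, hv2⟩
    exact huniq v w₀ hv1 hw₀1 hv2 hw₀2
  · intro wbar hwbar hfix w hw0 hrec
    have hmem : ∀ k, 5/2 ≤ w k := by
      intro k
      induction k with
      | zero => exact hw0
      | succ n ih => rw [hrec n]; exact part1 _ ih
    have hkey : ∀ k, |w k - wbar| ≤ c^k * |w 0 - wbar| := by
      intro k
      induction k with
      | zero => simp
      | succ n ih =>
        have h := hLip wbar (w n) hwbar (hmem n)
        rw [hfix] at h
        rw [hrec n]
        calc |T (w n) - wbar| ≤ c * |w n - wbar| := h
          _ ≤ c * (c^n * |w 0 - wbar|) := mul_le_mul_of_nonneg_left ih hc0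
          _ = c^(n+1) * |w 0 - wbar| := by ring
    have htend : Tendsto (fun k : ℕ => c^k * |w 0 - wbar|) atTop (𝓝 0) := by
      have h := tendsto_pow_atTop_nhds_zero_of_lt_one hc0 hc1
      simpa using h.mul_const |w 0 - wbar|
    rw [tendsto_iff_dist_tendsto_zero]
    apply squeeze_zero (fun k => dist_nonneg) (fun k => ?_) htend
    rw [Real.dist_eq]
    exact hkey k
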